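/- Let q > 0, a > 0, and let f : I → ℝ be a twice differentiable function on an open interval I containing 0, with f(t) > 0 for all t ∈ I, satisfying the ODE f''(t) = q · coth(f(t)) · (1 + f'(t)²) with initial conditions f(0) = a and f'(0) = 0. Then for all t ∈ I one has sinh(f(t))^q = sinh(a)^q · √(1 + f'(t)²), equivalently sinh(f(t))^q / √(1 + f'(t)²) = sinh(a)^q. -/
import Mathlib


/-- First integral (CP1) of the Cauchy problem
`f'' = q coth(f)(1+f'²)`, `f(0)=a`, `f'(0)=0`:
`sinh(f(t))^q = sinh(a)^q √(1+f'(t)²)` for all `t ∈ I`. -/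
theorem stmt_1 (q a : ℝ) (hq : 0 < q) (ha : 0 < a)
    (I : Set ℝ) (hIopen : IsOpen I) (hIconv : Convex ℝ I) (h0 : (0 : ℝ) ∈ I)
    (f f' f'' : ℝ → ℝ)
    (hf' : ∀ t ∈ I, HasDerivAt f (f' t) t)
    (hf'' : ∀ t ∈ I, HasDerivAt f' (f'' t) t)
    (hpos : ∀ t ∈ I, 0 < f t)
    (hode : ∀ t ∈ I, f'' t = q * (Real.cosh (f t) / Real.sinh (f t)) * (1 + f' t ^ 2))
    (hfa : f 0 = a) (hf'0 : f' 0 = 0) :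
    ∀ t ∈ I, Real.sinh (f t) ^ q = Real.sinh a ^ q * Real.sqrt (1 + f' t ^ 2) := by
  have hs : ∀ t ∈ I, 0 < Real.sinh (f t) := fun t ht => Real.sinh_pos_iff.2 (hpos t ht)
  have hden : ∀ t, (0:ℝ) < 1 + f' t ^ 2 := fun t => by positivity
  set h : ℝ → ℝ := fun t => q * Real.log (Real.sinh (f t)) - (1/2) * Real.log (1 + f' t ^ 2)
    with hh
  have hderiv : ∀ t ∈ I, HasDerivAt h 0 t := by
    intro t ht
    have H1 : HasDerivAt (fun t => Real.log (Real.sinh (f t)))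
        (Real.cosh (f t) * f' t / Real.sinh (f t)) t :=
      ((hf' t ht).sinh).log (ne_of_gt (hs t ht))
    have H2 : HasDerivAt (fun t => (1:ℝ) + f' t ^ 2) (2 * f' t * f'' t) t := by
      have := ((hf'' t ht).pow 2).const_add (1:ℝ)
      simpa [pow_one, mul_comm, mul_assoc, mul_left_comm] using this
    have H3 : HasDerivAt (fun t => Real.log (1 + f' t ^ 2))
        (2 * f' t * f'' t / (1 + f' t ^ 2)) t := H2.log (ne_of_gt (hden t))
    have H := (H1.const_mul q).sub (H3.const_mul (1/2))
    have e0 : q * (Real.cosh (f t) * f' t / Real.sinh (f t)) -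
        1/2 * (2 * f' t * f'' t / (1 + f' t ^ 2)) = 0 := by
      rw [hode t ht]
      have h1 := ne_of_gt (hs t ht)
      have h2 := ne_of_gt (hden t)
      field_simp
      ring
    rw [e0] at H
    exact H
  have key : ∀ t ∈ I, h t = h 0 := by
    intro t ht
    have := hIconv.norm_image_sub_le_of_norm_hasDerivWithin_le
      (f := h) (f' := fun _ => (0:ℝ)) (C := 0)
      (fun x hx => (hderiv x hx).hasDerivWithinAt) (fun x hx => by simp) h0 ht
    simp only [zero_mul, norm_le_zero_iff, sub_eq_zero] at this
    exact this
  intro t ht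
  have hkey := key t ht
  have h0v : h 0 = q * Real.log (Real.sinh a) := by
    simp [hh, hfa, hf'0]
  have hlog : q * Real.log (Real.sinh (f t)) =
      q * Real.log (Real.sinh a) + (1/2) * Real.log (1 + f' t ^ 2) := by
    rw [← h0v, ← hkey]; simp [hh]
  have hsa : (0:ℝ) < Real.sinh a := Real.sinh_pos_iff.2 ha
  have lhs : Real.sinh (f t) ^ q = Real.exp (q * Real.log (Real.sinh (f t))) := by
    rw [Real.rpow_def_of_pos (hs t ht)]; ring_nf
  have rhsa : Real.sinh a ^ q = Real.exp (q * Real.log (Real.sinh a)) := by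
    rw [Real.rpow_def_of_pos hsa]; ring_nf
  have rsq : Real.sqrt (1 + f' t ^ 2) = Real.exp ((1/2) * Real.log (1 + f' t ^ 2)) := by
    rw [show (1/2 : ℝ) * Real.log (1 + f' t ^ 2) = Real.log (1 + f' t ^ 2) / 2 by ring,
      ← Real.log_sqrt (le_of_lt (hden t)), Real.exp_log (Real.sqrt_pos.2 (hden t))]
  rw [lhs, rhsa, rsq, hlog, Real.exp_add]
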